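/- Let $p$ be a prime, $L, N$ integers with $0 < L < L+N < p$, and $\mathcal{A} \subseteq \mathbb{F}_p$ a finite set. Assuming the bound $J_3(L,N) \ll N^{21/4}$ on the number of solutions of $\sum_{i=1}^3 n_i! \equiv \sum_{i=4}^6 n_i! \pmod p$ with $L+1 \le n_i \le L+N$, one has $\max_{\gcd(a,p)=1} \Big| \sum_{n=L+1}^{L+N} \sum_{x \in \mathcal{A}} e_p(a\, n!\, x) \Big| \ll |\mathcal{A}|^{5/6} N^{7/8} p^{1/6}$, where $e_p(z) = \exp(2\pi i z / p)$. -/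

import Mathlib

open Finset Complex

private lemma addChar_map_sum {A M : Type*} [AddCommMonoid A] [CommMonoid M]
    (ψ : AddChar A M) {ι : Type*} (s : Finset ι) (g : ι → A) :
    ψ (∑ i ∈ s, g i) = ∏ i ∈ s, ψ (g i) := by
  induction s using Finset.cons_induction with
  | empty => simp
  | cons i s hi ih => simp [Finset.sum_cons, Finset.prod_cons, ψ.map_add_eq_mul, ih]

theorem stmt_12 (C : ℝ) (hC : 0 < C) :
    ∃ D : ℝ, 0 < D ∧ ∀ (p L N : ℕ), p.Prime → 0 < L → L + N < p →
      ∀ (A : Finset (ZMod p)),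
      (((((Fintype.piFinset fun _ : Fin 3 => Finset.Icc (L + 1) (L + N)) ×ˢ
          (Fintype.piFinset fun _ : Fin 3 => Finset.Icc (L + 1) (L + N))).filter
          (fun t : (Fin 3 → ℕ) × (Fin 3 → ℕ) =>
            ∑ i, (Nat.factorial (t.1 i) : ZMod p) = ∑ i, (Nat.factorial (t.2 i) : ZMod p))).card : ℝ)
          ≤ C * (N : ℝ) ^ ((21 : ℝ) / 4)) →
      ∀ a : ZMod p, a ≠ 0 →
        ‖∑ n ∈ Finset.Icc (L + 1) (L + N), ∑ x ∈ A,
            Complex.exp (2 * Real.pi * Complex.I *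
              ((a * (Nat.factorial n : ZMod p) * x).val : ℂ) / (p : ℂ))‖
          ≤ D * (A.card : ℝ) ^ ((5 : ℝ) / 6) * (N : ℝ) ^ ((7 : ℝ) / 8) * (p : ℝ) ^ ((1 : ℝ) / 6) := by
  refine ⟨max 1 (C ^ ((1:ℝ)/6)), lt_of_lt_of_le one_pos (le_max_left _ _), ?_⟩
  intro p L N hp hL hLN A hJ a ha
  haveI : NeZero p := ⟨hp.ne_zero⟩
  haveI : Fact p.Prime := ⟨hp⟩
  set I : Finset ℕ := Finset.Icc (L+1) (L+N) with hIdef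
  set ψ : AddChar (ZMod p) ℂ := ZMod.stdAddChar with hψdef
  set f : ZMod p → ℂ := fun x => ∑ n ∈ I, ψ (a * (Nat.factorial n : ZMod p) * x) with hf
  set P := Fintype.piFinset fun _ : Fin 3 => I with hP
  set J : ℕ := ((P ×ˢ P).filter (fun t : (Fin 3 → ℕ) × (Fin 3 → ℕ) =>
      ∑ i, (Nat.factorial (t.1 i) : ZMod p) = ∑ i, (Nat.factorial (t.2 i) : ZMod p))).card
    with hJdef
  have hexp : ∀ j : ZMod p,
      Complex.exp (2 * Real.pi * Complex.I * (j.val : ℂ) / p) = ψ j := by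
    intro j
    rw [hψdef, ZMod.stdAddChar_apply, ZMod.toCircle_apply]
  have hS : (∑ n ∈ I, ∑ x ∈ A, Complex.exp (2 * Real.pi * Complex.I *
      ((a * (Nat.factorial n : ZMod p) * x).val : ℂ) / (p : ℂ))) = ∑ x ∈ A, f x := by
    rw [Finset.sum_comm]
    exact Finset.sum_congr rfl fun x _ => Finset.sum_congr rfl fun n _ => hexp _
  have hconj : ∀ j : ZMod p, (starRingEnd ℂ) (ψ j) = ψ (-j) := by
    intro j
    rw [hψdef, ZMod.stdAddChar_apply, ZMod.stdAddChar_apply, ← Circle.coe_inv_eq_conj,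
      ← AddChar.map_neg_eq_inv]
  have hcube : ∀ (b : ZMod p) (x : ZMod p),
      (∑ n ∈ I, ψ (b * (Nat.factorial n : ZMod p) * x)) ^ 3
        = ∑ t ∈ P, ψ (b * x * ∑ i, (Nat.factorial (t i) : ZMod p)) := by
    intro b x
    have : (∑ n ∈ I, ψ (b * (Nat.factorial n : ZMod p) * x)) ^ 3
        = ∏ _i : Fin 3, ∑ n ∈ I, ψ (b * (Nat.factorial n : ZMod p) * x) := by
      simp [Finset.prod_const]
    rw [this, Finset.prod_univ_sum]
    refine Finset.sum_congr rfl fun t _ => ?_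
    rw [Finset.mul_sum, addChar_map_sum]
    exact Finset.prod_congr rfl fun i _ => by
      rw [show b * x * (Nat.factorial (t i) : ZMod p)
        = b * (Nat.factorial (t i) : ZMod p) * x by ring]
  have key : ∑ x : ZMod p, ‖f x‖ ^ 6 = (p : ℝ) * J := by
    have keyC : ∑ x : ZMod p, ((‖f x‖ : ℂ)) ^ 6 = (p : ℂ) * J := by
      have e1 : ∀ x : ZMod p, ((‖f x‖ : ℂ)) ^ 6
          = (f x) ^ 3 * ((starRingEnd ℂ) (f x)) ^ 3 := by
        intro x
        rw [← mul_pow, Complex.mul_conj, Complex.normSq_eq_norm_sq]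
        push_cast
        ring
      have e2 : ∀ x : ZMod p, (starRingEnd ℂ) (f x)
          = ∑ n ∈ I, ψ ((-a) * (Nat.factorial n : ZMod p) * x) := by
        intro x
        rw [hf]
        simp only [map_sum]
        refine Finset.sum_congr rfl fun n _ => ?_
        rw [hconj]
        congr 1
        ring
      calc ∑ x : ZMod p, ((‖f x‖ : ℂ)) ^ 6
          = ∑ x : ZMod p, (∑ t ∈ P, ψ (a * x * ∑ i, (Nat.factorial (t i) : ZMod p)))
            * (∑ u ∈ P, ψ ((-a) * x * ∑ i, (Nat.factorial (u i) : ZMod p))) := by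
            refine Finset.sum_congr rfl fun x _ => ?_
            rw [e1 x, e2 x, hf]
            rw [hcube a x, hcube (-a) x]
        _ = ∑ t ∈ P, ∑ u ∈ P, ∑ x : ZMod p,
            ψ (x * (a * ((∑ i, (Nat.factorial (t i) : ZMod p))
              - ∑ i, (Nat.factorial (u i) : ZMod p)))) := by
            simp_rw [Finset.sum_mul_sum]
            rw [Finset.sum_comm]
            refine Finset.sum_congr rfl fun t _ => ?_
            rw [Finset.sum_comm]
            refine Finset.sum_congr rfl fun u _ => Finset.sum_congr rfl fun x _ => ?_
            rw [← AddChar.map_add_eq_mul]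
            congr 1
            ring
        _ = ∑ t ∈ P, ∑ u ∈ P,
            (if (∑ i, (Nat.factorial (t i) : ZMod p)) = ∑ i, (Nat.factorial (u i) : ZMod p)
              then (p : ℂ) else 0) := by
            refine Finset.sum_congr rfl fun t _ => Finset.sum_congr rfl fun u _ => ?_
            rw [hψdef, AddChar.sum_mulShift _ (ZMod.isPrimitive_stdAddChar p), ZMod.card]
            have hiff : a * ((∑ i, (Nat.factorial (t i) : ZMod p))
                - ∑ i, (Nat.factorial (u i) : ZMod p)) = 0
                ↔ (∑ i, (Nat.factorial (t i) : ZMod p)) = ∑ i, (Nat.factorial (u i) : ZMod p) := by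
              rw [mul_eq_zero, sub_eq_zero]
              simp [ha]
            simp only [apply_ite (Nat.cast : ℕ → ℂ), Nat.cast_zero]
            exact if_congr hiff rfl rfl
        _ = (p : ℂ) * J := by
            rw [← Finset.sum_product']
            rw [← Finset.sum_filter, Finset.sum_const, nsmul_eq_mul, hJdef]
            push_cast
            rw [mul_comm]
    have hcast : ∑ x : ZMod p, ((‖f x‖ : ℂ)) ^ 6
        = ((∑ x : ZMod p, ‖f x‖ ^ 6 : ℝ) : ℂ) := by
      push_cast
      rfl
    rw [hcast] at keyC
    exact_mod_cast keyC
  rw [hS]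
  have hnorm : (0:ℝ) ≤ ‖∑ x ∈ A, f x‖ := norm_nonneg _
  have h5 : ‖∑ x ∈ A, f x‖ ^ 6 ≤ C * (A.card : ℝ) ^ 5 * (N:ℝ) ^ ((21:ℝ)/4) * p := by
    calc ‖∑ x ∈ A, f x‖ ^ 6 ≤ (∑ x ∈ A, ‖f x‖) ^ 6 :=
          pow_le_pow_left₀ hnorm (norm_sum_le _ _) 6
      _ ≤ (A.card : ℝ) ^ 5 * ∑ x ∈ A, ‖f x‖ ^ 6 :=
          pow_sum_le_card_mul_sum_pow (fun i _ => norm_nonneg _) 5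
      _ ≤ (A.card : ℝ) ^ 5 * ∑ x : ZMod p, ‖f x‖ ^ 6 := by
          have hsub : ∑ x ∈ A, ‖f x‖ ^ 6 ≤ ∑ x : ZMod p, ‖f x‖ ^ 6 :=
            Finset.sum_le_sum_of_subset_of_nonneg (Finset.subset_univ A)
              (fun i _ _ => by positivity)
          exact mul_le_mul_of_nonneg_left hsub (by positivity)
      _ = (A.card : ℝ) ^ 5 * ((p:ℝ) * J) := by rw [key]
      _ ≤ (A.card : ℝ) ^ 5 * ((p:ℝ) * (C * (N:ℝ) ^ ((21:ℝ)/4))) := by gcongr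
      _ = C * (A.card : ℝ) ^ 5 * (N:ℝ) ^ ((21:ℝ)/4) * p := by ring
  have h6 : ‖∑ x ∈ A, f x‖
      ≤ (C * (A.card : ℝ) ^ 5 * (N:ℝ) ^ ((21:ℝ)/4) * p) ^ ((1:ℝ)/6) := by
    calc ‖∑ x ∈ A, f x‖ = (‖∑ x ∈ A, f x‖ ^ (6:ℕ)) ^ ((1:ℝ)/6) := by
          rw [← Real.rpow_natCast _ 6, ← Real.rpow_mul hnorm]
          norm_num
      _ ≤ (C * (A.card : ℝ) ^ 5 * (N:ℝ) ^ ((21:ℝ)/4) * p) ^ ((1:ℝ)/6) :=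
          Real.rpow_le_rpow (by positivity) h5 (by norm_num)
  have h7 : (C * (A.card : ℝ) ^ 5 * (N:ℝ) ^ ((21:ℝ)/4) * p) ^ ((1:ℝ)/6)
      = C ^ ((1:ℝ)/6) * (A.card : ℝ) ^ ((5:ℝ)/6) * (N:ℝ) ^ ((7:ℝ)/8) * (p:ℝ) ^ ((1:ℝ)/6) := by
    rw [← Real.rpow_natCast ((A.card : ℝ)) 5,
      Real.mul_rpow (by positivity) (by positivity),
      Real.mul_rpow (by positivity) (by positivity),
      Real.mul_rpow (by positivity) (by positivity),
      ← Real.rpow_mul (by positivity), ← Real.rpow_mul (by positivity)]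
    norm_num
  refine (h6.trans h7.le).trans ?_
  exact mul_le_mul_of_nonneg_right (mul_le_mul_of_nonneg_right
    (mul_le_mul_of_nonneg_right (le_max_right _ _) (by positivity)) (by positivity))
    (by positivity)
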